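/- Let a₁,…,a_n be distinct reals (n ≥ 1), ε₁,…,ε_n ∈ {-1,1}, Δᵢ(a) = εᵢ(a-aᵢ), let I ⊆ ℝ be an open interval on which Δᵢ > 0 for all i, let F̂(a) = ∏_{i=1}^n (a-aᵢ), and let ν, ξ₁,…,ξ_n ∈ ℝ. Then the function x(a) = (ν/2) a + ∑_{i=1}^n ξᵢ Δᵢ(a)^{-1/2} satisfies (Op_n[F̂]x)(a) = (n + 1/2) ν a − ν σ₁ for all a ∈ I, where σ₁ = ∑_{i=1}^n aᵢ; in particular x solves the weakly inhomogeneous linear ODE Op_n[F̂]x = (n + 1/2)ν a + β with the constant β = −ν σ₁. -/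

import Mathlib

open Polynomial

/-- The Pochhammer symbol `(1/2)_s`. -/
noncomputable def poch (s : ℕ) : ℝ := (ascPochhammer ℝ s).eval (1/2 : ℝ)

/-- The operator `Op_n[F]` acting on `h`:
`(Op_n[F]h)(a) = ∑_{s=0}^{n} F^{(n-s)}(a)/(n-s)! · h^{(s)}(a)/(1/2)_s`. -/
noncomputable def Op (n : ℕ) (F h : ℝ → ℝ) (a : ℝ) : ℝ :=
  ∑ s ∈ Finset.range (n + 1),
    iteratedDeriv (n - s) F a / (Nat.factorial (n - s) : ℝ) *
      (iteratedDeriv s h a / poch s)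

lemma poch_zero : poch 0 = 1 := by simp [poch]

lemma poch_one : poch 1 = 1/2 := by simp [poch]

lemma poch_succ (s : ℕ) : poch (s + 1) = poch s * (1/2 + s) := by
  simp [poch, ascPochhammer_succ_right]

lemma poch_pos (s : ℕ) : 0 < poch s := by
  induction s with
  | zero => simp [poch_zero]
  | succ k ih => rw [poch_succ]; positivity

lemma iteratedDeriv_polyEval (p : ℝ[X]) (k : ℕ) :
    iteratedDeriv k (fun u => p.eval u) = fun u => (derivative^[k] p).eval u := by
  induction k generalizing p with
  | zero => simp
  | succ k ih =>
    rw [iteratedDeriv_succ', Function.iterate_succ_apply]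
    rw [← ih (derivative p)]
    have h : (deriv fun u => p.eval u) = fun u => (derivative p).eval u :=
      funext fun u => p.deriv
    rw [h]

lemma iter_formula {n : ℕ} (a ε : Fin n → ℝ) (hε : ∀ i, ε i * ε i = 1)
    (I : Set ℝ) (hIopen : IsOpen I)
    (hΔ : ∀ i, ∀ t ∈ I, 0 < ε i * (t - a i)) (ν : ℝ) (ξ : Fin n → ℝ) (s : ℕ) :
    ∀ t ∈ I, iteratedDeriv s
      (fun u => ν / 2 * u + ∑ i, ξ i * (ε i * (u - a i)) ^ (-(1/2) : ℝ)) t =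
      (if s = 0 then ν / 2 * t else if s = 1 then ν / 2 else 0) +
        ∑ i, ξ i * ((-1) ^ s * poch s *
          ((ε i * (t - a i)) ^ (-(1/2) : ℝ) * (t - a i) ^ (-(s : ℤ)))) := by
  induction s with
  | zero =>
    intro t ht
    simp [poch_zero]
  | succ s ih =>
    intro t ht
    rw [iteratedDeriv_succ]
    have hev : iteratedDeriv s
        (fun u => ν / 2 * u + ∑ i, ξ i * (ε i * (u - a i)) ^ (-(1/2) : ℝ))
        =ᶠ[nhds t] fun u =>
          (if s = 0 then ν / 2 * u else if s = 1 then ν / 2 else 0) +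
          ∑ i, ξ i * ((-1) ^ s * poch s *
            ((ε i * (u - a i)) ^ (-(1/2) : ℝ) * (u - a i) ^ (-(s : ℤ)))) :=
      Filter.eventuallyEq_of_mem (hIopen.mem_nhds ht) (fun u hu => ih u hu)
    rw [hev.deriv_eq]
    -- derivative of each summand
    have hL : HasDerivAt (fun u : ℝ => if s = 0 then ν / 2 * u else if s = 1 then ν / 2 else 0)
        (if s = 0 then ν / 2 else 0) t := by
      rcases s with _ | s
      · simpa using (hasDerivAt_id t).const_mul (ν / 2)
      · rcases s with _ | s <;> simp <;> exact hasDerivAt_const _ _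
    have hS : ∀ i : Fin n, HasDerivAt
        (fun u => ξ i * ((-1) ^ s * poch s *
          ((ε i * (u - a i)) ^ (-(1/2) : ℝ) * (u - a i) ^ (-(s : ℤ)))))
        (ξ i * ((-1) ^ (s+1) * poch (s+1) *
          ((ε i * (t - a i)) ^ (-(1/2) : ℝ) * (t - a i) ^ (-((s:ℕ)+1 : ℕ) : ℤ)))) t := by
      intro i
      have hpos : 0 < ε i * (t - a i) := hΔ i t ht
      have hne : ε i * (t - a i) ≠ 0 := ne_of_gt hpos
      have hεne : ε i ≠ 0 := by
        intro h; have := hε i; rw [h] at this; norm_num at this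
      have hd : t - a i ≠ 0 := by
        intro h; rw [h, mul_zero] at hpos; exact lt_irrefl 0 hpos
      have hb : HasDerivAt (fun u : ℝ => ε i * (u - a i)) (ε i) t := by
        simpa using ((hasDerivAt_id t).sub_const (a i)).const_mul (ε i)
      have hf := hb.rpow_const (p := (-(1/2) : ℝ)) (Or.inl hne)
      have hg : HasDerivAt (fun u : ℝ => (u - a i) ^ (-(s : ℤ)))
          (((-(s:ℤ)) : ℝ) * (t - a i) ^ ((-(s:ℤ)) - 1)) t := by
        have h1 := hasDerivAt_zpow (-(s:ℤ)) (t - a i) (Or.inl hd)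
        have h2 := ((hasDerivAt_id t).sub_const (a i))
        simpa [Function.comp_def] using h1.comp t h2
      have hfg := (hf.mul hg).const_mul ((-1 : ℝ) ^ s * poch s)
      have hfgξ := hfg.const_mul (ξ i)
      refine hfgξ.congr_deriv ?_
      symm
      have e1 : (ε i * (t - a i)) ^ ((-(1/2) : ℝ) - 1)
          = (ε i * (t - a i)) ^ (-(1/2) : ℝ) * (ε i * (t - a i))⁻¹ := by
        rw [Real.rpow_sub hpos, Real.rpow_one, div_eq_mul_inv]
      have e2 : ε i * (ε i * (t - a i))⁻¹ = (t - a i)⁻¹ := by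
        rw [mul_inv, ← mul_assoc, mul_inv_cancel₀ hεne, one_mul]
      have e3 : (t - a i) ^ ((-(s:ℤ)) - 1) = (t - a i) ^ (-(s:ℤ)) * (t - a i)⁻¹ := by
        rw [zpow_sub₀ hd, zpow_one, div_eq_mul_inv]
      have e4 : (t - a i) ^ (-((s:ℕ)+1 : ℕ) : ℤ) = (t - a i) ^ (-(s:ℤ)) * (t - a i)⁻¹ := by
        rw [show (-((s:ℕ)+1 : ℕ) : ℤ) = (-(s:ℤ)) - 1 by push_cast; ring]
        exact e3
      rw [e1, e3, e4, poch_succ, pow_succ]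
      push_cast
      linear_combination (ξ i * ((-1:ℝ) ^ s * poch s) * (1/2) *
        ((ε i * (t - a i)) ^ (-(1/2) : ℝ)) * ((t - a i) ^ (-(s:ℤ)))) * e2
    have htot := hL.fun_add (HasDerivAt.fun_sum (u := (Finset.univ : Finset (Fin n))) (fun i _ => hS i))
    rw [htot.deriv]
    congr 1
    rcases s with _ | s <;> simp

/-- For distinct reals `a₁,…,a_n` (`n ≥ 1`), signs `εᵢ ∈ {±1}`,
`Δᵢ(a) = εᵢ(a-aᵢ)` positive on the open interval `I`, `F̂(a) = ∏ᵢ (a-aᵢ)` and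
`x(a) = (ν/2) a + ∑ᵢ ξᵢ Δᵢ(a)^{-1/2}`, one has
`(Op_n[F̂]x)(a) = (n + 1/2) ν a − ν σ₁` on `I`, with `σ₁ = ∑ᵢ aᵢ`; in particular `x` solves
the weakly inhomogeneous linear ODE `Op_n[F̂]x = (n + 1/2)ν a + β` with `β = −ν σ₁`. -/
theorem stmt18 (n : ℕ) (hn : 1 ≤ n) (a : Fin n → ℝ) (ha : Function.Injective a)
    (ε : Fin n → ℝ) (hε : ∀ i, ε i = 1 ∨ ε i = -1)
    (I : Set ℝ) (hIopen : IsOpen I) (hIconn : I.OrdConnected)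
    (hΔ : ∀ i, ∀ t ∈ I, 0 < ε i * (t - a i))
    (ν : ℝ) (ξ : Fin n → ℝ) :
    ∀ t ∈ I,
      Op n (fun u => ∏ i, (u - a i))
        (fun u => ν / 2 * u + ∑ i, ξ i * (ε i * (u - a i)) ^ (-(1/2) : ℝ)) t =
      ((n : ℝ) + 1/2) * ν * t - ν * ∑ i, a i := by
  intro t ht
  classical
  have hε2 : ∀ i, ε i * ε i = 1 := fun i => by rcases hε i with h | h <;> rw [h] <;> norm_num
  have hd : ∀ i : Fin n, t - a i ≠ 0 := by
    intro i h
    have := hΔ i t ht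
    rw [h, mul_zero] at this
    exact lt_irrefl 0 this
  set P : ℝ[X] := ∏ i, (X - C (a i)) with hP
  set Q : ℝ[X] := ∏ i, (X + C (t - a i)) with hQ
  have hQmonic : Q.Monic := monic_prod_of_monic _ _ fun i _ => monic_X_add_C _
  have hQdeg : Q.natDegree = n := by
    rw [hQ, natDegree_prod_of_monic _ _ fun i _ => monic_X_add_C _]
    simp only [natDegree_X_add_C]
    simp
  have htaylor : taylor t P = Q := by
    rw [hP, hQ, show taylor t = ⇑(taylorAlgHom (R := ℝ) t) from rfl, map_prod]
    refine Finset.prod_congr rfl fun i _ => ?_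
    rw [taylorAlgHom_apply, map_sub, taylor_X, taylor_C]
    rw [C_sub]
    ring
  have hA : ∀ k, iteratedDeriv k (fun u => ∏ i, (u - a i)) t
      = (Nat.factorial k : ℝ) * Q.coeff k := by
    intro k
    have h1 : (fun u : ℝ => ∏ i, (u - a i)) = fun u => P.eval u := by
      funext u; rw [hP, eval_prod]; simp
    have h2 : (derivative (R := ℝ))^[k] P = k.factorial • (hasseDeriv k P) := by
      rw [← Polynomial.factorial_smul_hasseDeriv]
      rfl
    have h3 : iteratedDeriv k (fun u => ∏ i, (u - a i)) t
        = eval t ((derivative (R := ℝ))^[k] P) := by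
      rw [h1, iteratedDeriv_polyEval]
    rw [h3, h2, nsmul_eq_mul, eval_mul, eval_natCast, ← taylor_coeff, htaylor]
  -- key vanishing sum
  have hkey : ∀ i : Fin n,
      ∑ s ∈ Finset.range (n + 1), Q.coeff (n - s) * ((-1 : ℝ) ^ s * (t - a i) ^ (-(s : ℤ))) = 0 := by
    intro i
    have hpow : (t - a i) ^ n ≠ 0 := pow_ne_zero _ (hd i)
    have hmul : (t - a i) ^ n *
        (∑ s ∈ Finset.range (n + 1), Q.coeff (n - s) * ((-1 : ℝ) ^ s * (t - a i) ^ (-(s : ℤ)))) = 0 := by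
      rw [Finset.mul_sum]
      have hterm : ∀ s ∈ Finset.range (n + 1),
          (t - a i) ^ n * (Q.coeff (n - s) * ((-1 : ℝ) ^ s * (t - a i) ^ (-(s : ℤ))))
          = (-1 : ℝ) ^ n * (Q.coeff (n - s) * (-1) ^ (n - s) * (t - a i) ^ (n - s)) := by
        intro s hs
        have hsn : s ≤ n := Nat.lt_succ_iff.mp (Finset.mem_range.mp hs)
        have hp1 : (t - a i) ^ n * (t - a i) ^ (-(s : ℤ)) = (t - a i) ^ (n - s) := by
          rw [← zpow_natCast (t - a i) n, ← zpow_add₀ (hd i), ← zpow_natCast (t - a i) (n - s)]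
          congr 1
          omega
        have hp2 : (-1 : ℝ) ^ s = (-1) ^ n * (-1) ^ (n - s) := by
          rw [← pow_add, show n + (n - s) = s + 2 * (n - s) by omega, pow_add, pow_mul]
          norm_num
        calc (t - a i) ^ n * (Q.coeff (n - s) * ((-1 : ℝ) ^ s * (t - a i) ^ (-(s : ℤ))))
            = (-1 : ℝ) ^ s * Q.coeff (n - s) * ((t - a i) ^ n * (t - a i) ^ (-(s : ℤ))) := by ring
          _ = (-1 : ℝ) ^ s * Q.coeff (n - s) * (t - a i) ^ (n - s) := by rw [hp1]
          _ = (-1 : ℝ) ^ n * (Q.coeff (n - s) * (-1) ^ (n - s) * (t - a i) ^ (n - s)) := by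
              rw [hp2]; ring
      rw [Finset.sum_congr rfl hterm, ← Finset.mul_sum]
      have hrefl : ∑ s ∈ Finset.range (n + 1),
          Q.coeff (n - s) * (-1 : ℝ) ^ (n - s) * (t - a i) ^ (n - s)
          = ∑ k ∈ Finset.range (n + 1), Q.coeff k * (-1 : ℝ) ^ k * (t - a i) ^ k := by
        exact Finset.sum_range_reflect (fun k => Q.coeff k * (-1 : ℝ) ^ k * (t - a i) ^ k) (n + 1)
      rw [hrefl]
      have heval : ∑ k ∈ Finset.range (n + 1), Q.coeff k * (-1 : ℝ) ^ k * (t - a i) ^ k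
          = Q.eval (a i - t) := by
        rw [eval_eq_sum_range' (show Q.natDegree < n + 1 by omega)]
        refine Finset.sum_congr rfl fun k _ => ?_
        rw [show (a i - t) = (-1) * (t - a i) by ring, mul_pow]
        ring
      rw [heval]
      have : Q.eval (a i - t) = 0 := by
        rw [hQ, eval_prod]
        refine Finset.prod_eq_zero (Finset.mem_univ i) ?_
        simp
      rw [this, mul_zero]
    exact (mul_eq_zero.mp hmul).resolve_left hpow
  -- linear-part sum
  have hQn : Q.coeff n = 1 := by
    have := hQmonic.coeff_natDegree
    rwa [hQdeg] at this
  have hQn1 : Q.coeff (n - 1) = (n : ℝ) * t - ∑ i, a i := by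
    have hc : n - 1 ≤ (Finset.univ : Finset (Fin n)).card := by
      rw [Finset.card_univ, Fintype.card_fin]; omega
    have := Finset.prod_X_add_C_coeff (Finset.univ : Finset (Fin n)) (fun i => t - a i) hc
    rw [← hQ] at this
    rw [this]
    rw [show (Finset.univ : Finset (Fin n)).card - (n - 1) = 1 by
      rw [Finset.card_univ, Fintype.card_fin]; omega]
    rw [Finset.powersetCard_one, Finset.sum_map]
    simp only [Function.Embedding.coeFn_mk, Finset.prod_singleton]
    rw [Finset.sum_sub_distrib]
    simp [mul_comm]
  have hlin : ∑ s ∈ Finset.range (n + 1), Q.coeff (n - s) *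
      ((if s = 0 then ν / 2 * t else if s = 1 then ν / 2 else 0) / poch s)
      = ((n : ℝ) + 1/2) * ν * t - ν * ∑ i, a i := by
    have hsub : ({0, 1} : Finset ℕ) ⊆ Finset.range (n + 1) := by
      intro x hx
      simp only [Finset.mem_insert, Finset.mem_singleton] at hx
      rcases hx with h | h <;> rw [h] <;> simp [Finset.mem_range] <;> omega
    rw [← Finset.sum_subset hsub ?side]
    case side =>
      intro s _ hs
      simp only [Finset.mem_insert, Finset.mem_singleton, not_or] at hs
      rw [if_neg hs.1, if_neg hs.2, zero_div, mul_zero]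
    rw [Finset.sum_pair (by norm_num : (0 : ℕ) ≠ 1)]
    norm_num [hQn, hQn1, poch_zero, poch_one]
    ring
  -- assemble
  rw [Op]
  have hx := iter_formula a ε hε2 I hIopen hΔ ν ξ
  have hterm : ∀ s ∈ Finset.range (n + 1),
      iteratedDeriv (n - s) (fun u => ∏ i, (u - a i)) t / (Nat.factorial (n - s) : ℝ) *
        (iteratedDeriv s
          (fun u => ν / 2 * u + ∑ i, ξ i * (ε i * (u - a i)) ^ (-(1/2) : ℝ)) t / poch s)
      = Q.coeff (n - s) *
          ((if s = 0 then ν / 2 * t else if s = 1 then ν / 2 else 0) / poch s) +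
        ∑ i, (ξ i * (ε i * (t - a i)) ^ (-(1/2) : ℝ)) *
          (Q.coeff (n - s) * ((-1 : ℝ) ^ s * (t - a i) ^ (-(s : ℤ)))) := by
    intro s _
    have hfac : (Nat.factorial (n - s) : ℝ) ≠ 0 := by
      exact_mod_cast Nat.factorial_ne_zero (n - s)
    have hps : poch s ≠ 0 := ne_of_gt (poch_pos s)
    rw [hA (n - s), mul_div_cancel_left₀ _ hfac, hx s t ht, add_div, Finset.sum_div,
      mul_add, Finset.mul_sum]
    congr 1
    refine Finset.sum_congr rfl fun i _ => ?_
    rw [show ξ i * ((-1 : ℝ) ^ s * poch s *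
          ((ε i * (t - a i)) ^ (-(1/2) : ℝ) * (t - a i) ^ (-(s : ℤ))))
        = poch s * (ξ i * ((-1 : ℝ) ^ s *
          ((ε i * (t - a i)) ^ (-(1/2) : ℝ) * (t - a i) ^ (-(s : ℤ))))) from by ring,
      mul_div_cancel_left₀ _ hps]
    ring
  rw [Finset.sum_congr rfl hterm, Finset.sum_add_distrib, hlin, Finset.sum_comm]
  have hzero : ∀ i : Fin n, ∑ s ∈ Finset.range (n + 1),
      (ξ i * (ε i * (t - a i)) ^ (-(1/2) : ℝ)) *
        (Q.coeff (n - s) * ((-1 : ℝ) ^ s * (t - a i) ^ (-(s : ℤ)))) = 0 := by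
    intro i
    rw [← Finset.mul_sum, hkey i, mul_zero]
  rw [Finset.sum_congr rfl fun i _ => hzero i]
  simp
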